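/- arXiv:1403.7529 — 2 statements merged into one kernel-verified Lean document; each statement's English description precedes it below -/
import Mathlib

section
/- For t ∈ ℝ let x₁(u,v,t) = (sin u cos v, t(π − v)v + sin u sin v, cos u). Then the mean-curvature numerator H₁(u,v,t) = e₁G₁ − 2F₁f₁ + g₁E₁ of the surface (u,v) ↦ x₁(u,v,t) is, for every fixed (u,v), a cubic polynomial in t: H₁(u,v,t) = p₀(u,v) + p₁(u,v) t + p₂(u,v) t² + p₃(u,v) t³, where p₀ = −2 sin³u, p₁ = −2 sin²u (sin v + 2(π − 2v) cos v), p₂ = −(1/4) (π − 2v)² sin u ( cos(2(u−v)) + cos(2(u+v)) − 2 cos(2u) + 6 cos(2v) + 6 ), and p₃ = −(π − 2v)³ cos v. -/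
/- Differential-geometric framework: partial derivatives, fundamental magnitudes,
   cross product and mean-curvature numerator for parametrized surfaces x : ℝ² → ℝ³. -/

noncomputable section
open Real MeasureTheory intervalIntegral
open scoped RealInnerProductSpace

abbrev E3 : Type := EuclideanSpace ℝ (Fin 3)

/-- The vector (a, b, c) ∈ ℝ³. -/
def vec3 (a b c : ℝ) : E3 := WithLp.toLp 2 ![a, b, c]

/-- Cross product on ℝ³. -/
def cross (a b : E3) : E3 :=
  vec3 (a 1 * b 2 - a 2 * b 1) (a 2 * b 0 - a 0 * b 2) (a 0 * b 1 - a 1 * b 0)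

/-- Partial derivative with respect to the first parameter. -/
def pu (x : ℝ → ℝ → E3) (u v : ℝ) : E3 := deriv (fun s => x s v) u

/-- Partial derivative with respect to the second parameter. -/
def pv (x : ℝ → ℝ → E3) (u v : ℝ) : E3 := deriv (fun s => x u s) v

/-- First fundamental magnitude E = ⟨x_u, x_u⟩. -/
def Emag (x : ℝ → ℝ → E3) (u v : ℝ) : ℝ := ⟪pu x u v, pu x u v⟫

/-- First fundamental magnitude F = ⟨x_u, x_v⟩. -/
def Fmag (x : ℝ → ℝ → E3) (u v : ℝ) : ℝ := ⟪pu x u v, pv x u v⟫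

/-- First fundamental magnitude G = ⟨x_v, x_v⟩. -/
def Gmag (x : ℝ → ℝ → E3) (u v : ℝ) : ℝ := ⟪pv x u v, pv x u v⟫

/-- Cross-product second fundamental magnitude e = ⟨x_uu, x_u × x_v⟩. -/
def emag (x : ℝ → ℝ → E3) (u v : ℝ) : ℝ := ⟪pu (pu x) u v, cross (pu x u v) (pv x u v)⟫

/-- Cross-product second fundamental magnitude f = ⟨x_uv, x_u × x_v⟩. -/
def fmag (x : ℝ → ℝ → E3) (u v : ℝ) : ℝ := ⟪pv (pu x) u v, cross (pu x u v) (pv x u v)⟫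

/-- Cross-product second fundamental magnitude g = ⟨x_vv, x_u × x_v⟩. -/
def gmag (x : ℝ → ℝ → E3) (u v : ℝ) : ℝ := ⟪pv (pv x) u v, cross (pu x u v) (pv x u v)⟫

/-- Mean-curvature numerator H = eG − 2Ff + gE. -/
def Hnum (x : ℝ → ℝ → E3) (u v : ℝ) : ℝ :=
  emag x u v * Gmag x u v - 2 * Fmag x u v * fmag x u v + gmag x u v * Emag x u v

/-- The normal-variation family x₁(u,v,t) = (sin u cos v, t(π − v)v + sin u sin v, cos u)
of the unit hemisphere, displaced by t v(π − v) in the fixed direction (0,1,0). -/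
def hemiVar (t : ℝ) : ℝ → ℝ → E3 :=
  fun u v => vec3 (Real.sin u * Real.cos v) (t * (π - v) * v + Real.sin u * Real.sin v)
    (Real.cos u)

/- Auxiliary lemmas -/

lemma hasDerivAt_vec3 {f g h : ℝ → ℝ} {f' g' h' : ℝ} {x : ℝ}
    (hf : HasDerivAt f f' x) (hg : HasDerivAt g g' x) (hh : HasDerivAt h h' x) :
    HasDerivAt (fun s => vec3 (f s) (g s) (h s)) (vec3 f' g' h') x := by
  have H : HasDerivAt (fun s => (![f s, g s, h s] : Fin 3 → ℝ)) ![f', g', h'] x := by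
    apply hasDerivAt_pi.mpr
    intro i
    fin_cases i <;> simpa
  exact ((PiLp.continuousLinearEquiv 2 ℝ (fun _ : Fin 3 => ℝ)).symm.hasFDerivAt.comp_hasDerivAt
    x H.hasFDerivAt)

lemma hasDerivAt_congr_d {f : ℝ → ℝ} {d d' x : ℝ} (h : HasDerivAt f d x) (hd : d' = d) :
    HasDerivAt f d' x := hd ▸ h

lemma hd_quad (t v : ℝ) : HasDerivAt (fun s : ℝ => t * (π - s) * s) (t * (π - 2 * v)) v := by
  have h1 : HasDerivAt (fun s : ℝ => t * (π - s)) (t * (-1)) v :=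
    ((hasDerivAt_id v).const_sub π).const_mul t
  have h2 := h1.mul (hasDerivAt_id v)
  simp only [id_eq] at h2
  exact hasDerivAt_congr_d h2 (by ring)

lemma pu_hemi (t u v : ℝ) :
    pu (hemiVar t) u v
      = vec3 (Real.cos u * Real.cos v) (Real.cos u * Real.sin v) (-Real.sin u) := by
  have h : HasDerivAt (fun s => hemiVar t s v)
      (vec3 (Real.cos u * Real.cos v) (Real.cos u * Real.sin v) (-Real.sin u)) u := by
    apply hasDerivAt_vec3
    · exact (Real.hasDerivAt_sin u).mul_const _
    · exact hasDerivAt_congr_d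
        ((hasDerivAt_const u (t * (π - v) * v)).add ((Real.hasDerivAt_sin u).mul_const _))
        (by ring)
    · exact Real.hasDerivAt_cos u
  exact h.deriv

lemma pv_hemi (t u v : ℝ) :
    pv (hemiVar t) u v
      = vec3 (-(Real.sin u * Real.sin v)) (t * (π - 2 * v) + Real.sin u * Real.cos v) 0 := by
  have h : HasDerivAt (fun s => hemiVar t u s)
      (vec3 (-(Real.sin u * Real.sin v)) (t * (π - 2 * v) + Real.sin u * Real.cos v) 0) v := by
    apply hasDerivAt_vec3
    · exact hasDerivAt_congr_d ((Real.hasDerivAt_cos v).const_mul (Real.sin u)) (by ring)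
    · exact (hd_quad t v).add ((Real.hasDerivAt_sin v).const_mul (Real.sin u))
    · exact hasDerivAt_const v _
  exact h.deriv

lemma puu_hemi (t u v : ℝ) :
    pu (pu (hemiVar t)) u v
      = vec3 (-(Real.sin u * Real.cos v)) (-(Real.sin u * Real.sin v)) (-Real.cos u) := by
  have hf : (fun s => pu (hemiVar t) s v)
      = fun s => vec3 (Real.cos s * Real.cos v) (Real.cos s * Real.sin v) (-Real.sin s) :=
    funext fun s => pu_hemi t s v
  have h : HasDerivAt (fun s => vec3 (Real.cos s * Real.cos v) (Real.cos s * Real.sin v)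
      (-Real.sin s))
      (vec3 (-(Real.sin u * Real.cos v)) (-(Real.sin u * Real.sin v)) (-Real.cos u)) u := by
    apply hasDerivAt_vec3
    · exact hasDerivAt_congr_d ((Real.hasDerivAt_cos u).mul_const _) (by ring)
    · exact hasDerivAt_congr_d ((Real.hasDerivAt_cos u).mul_const _) (by ring)
    · exact (Real.hasDerivAt_sin u).neg
  show deriv (fun s => pu (hemiVar t) s v) u = _
  rw [hf]
  exact h.deriv

lemma puv_hemi (t u v : ℝ) :
    pv (pu (hemiVar t)) u v
      = vec3 (-(Real.cos u * Real.sin v)) (Real.cos u * Real.cos v) 0 := by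
  have hf : (fun s => pu (hemiVar t) u s)
      = fun s => vec3 (Real.cos u * Real.cos s) (Real.cos u * Real.sin s) (-Real.sin u) :=
    funext fun s => pu_hemi t u s
  have h : HasDerivAt (fun s => vec3 (Real.cos u * Real.cos s) (Real.cos u * Real.sin s)
      (-Real.sin u)) (vec3 (-(Real.cos u * Real.sin v)) (Real.cos u * Real.cos v) 0) v := by
    apply hasDerivAt_vec3
    · exact hasDerivAt_congr_d ((Real.hasDerivAt_cos v).const_mul _) (by ring)
    · exact hasDerivAt_congr_d ((Real.hasDerivAt_sin v).const_mul _) (by ring)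
    · exact hasDerivAt_const v _
  show deriv (fun s => pu (hemiVar t) u s) v = _
  rw [hf]
  exact h.deriv

lemma pvv_hemi (t u v : ℝ) :
    pv (pv (hemiVar t)) u v
      = vec3 (-(Real.sin u * Real.cos v)) (-2 * t - Real.sin u * Real.sin v) 0 := by
  have hf : (fun s => pv (hemiVar t) u s)
      = fun s => vec3 (-(Real.sin u * Real.sin s)) (t * (π - 2 * s) + Real.sin u * Real.cos s)
          0 := funext fun s => pv_hemi t u s
  have h : HasDerivAt (fun s => vec3 (-(Real.sin u * Real.sin s))
      (t * (π - 2 * s) + Real.sin u * Real.cos s) 0)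
      (vec3 (-(Real.sin u * Real.cos v)) (-2 * t - Real.sin u * Real.sin v) 0) v := by
    apply hasDerivAt_vec3
    · exact hasDerivAt_congr_d ((Real.hasDerivAt_sin v).const_mul _).neg (by ring)
    · have h1 : HasDerivAt (fun s : ℝ => t * (π - 2 * s)) (t * (-2)) v := by
        have := (((hasDerivAt_id v).const_mul (2 : ℝ)).const_sub π).const_mul t
        simp only [id_eq] at this
        exact hasDerivAt_congr_d this (by ring)
      exact hasDerivAt_congr_d (h1.add ((Real.hasDerivAt_cos v).const_mul _)) (by ring)
    · exact hasDerivAt_const v _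
  show deriv (fun s => pv (hemiVar t) u s) v = _
  rw [hf]
  exact h.deriv

lemma vec3_apply0 (a b c : ℝ) : vec3 a b c 0 = a := rfl
lemma vec3_apply1 (a b c : ℝ) : vec3 a b c 1 = b := rfl
lemma vec3_apply2 (a b c : ℝ) : vec3 a b c 2 = c := rfl

/-- The mean-curvature numerator of the displaced hemisphere is, for each fixed (u,v),
a cubic polynomial in t with the stated coefficients. -/
theorem stmt_4 (u v t : ℝ) :
    Hnum (hemiVar t) u v
      = (-2 * Real.sin u ^ 3)
        + (-2 * Real.sin u ^ 2 * (Real.sin v + 2 * (π - 2 * v) * Real.cos v)) * t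
        + (-(1 / 4) * (π - 2 * v) ^ 2 * Real.sin u
            * (Real.cos (2 * (u - v)) + Real.cos (2 * (u + v)) - 2 * Real.cos (2 * u)
                + 6 * Real.cos (2 * v) + 6)) * t ^ 2
        + (-(π - 2 * v) ^ 3 * Real.cos v) * t ^ 3 := by
  have h1 := Real.sin_sq_add_cos_sq u
  have h2 := Real.sin_sq_add_cos_sq v
  rw [Hnum, Emag, Fmag, Gmag, emag, fmag, gmag, pu_hemi, pv_hemi, puu_hemi, puv_hemi, pvv_hemi,
    show 2 * (u - v) = 2 * u - 2 * v by ring, show 2 * (u + v) = 2 * u + 2 * v by ring,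
    Real.cos_sub, Real.cos_add]
  simp only [cross, vec3_apply0, vec3_apply1, vec3_apply2, PiLp.inner_apply, RCLike.inner_apply,
    conj_trivial, Fin.sum_univ_three, vec3_apply0, vec3_apply1, vec3_apply2,
    Real.cos_two_mul, Real.sin_two_mul]
  set su := Real.sin u
  set cu := Real.cos u
  set sv := Real.sin v
  set cv := Real.cos v
  set w := π - 2 * v with hw
  linear_combination
    (-cv*t^3*w^3 - 2*su*t^2*w^2 - su*cv^2*t^2*w^2 + su*sv^2*t^2*w^2 - 4*su^2*cv^3*t*w
      - 2*su^2*sv*cv^2*t - 4*su^2*sv^2*cv*t*w - 2*su^2*sv^3*t - 2*su^3*cv^4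
      - 4*su^3*sv^2*cv^2 - 2*su^3*sv^4) * h1
    + (su*t^2*w^2 - 4*su^2*cv*t*w - 2*su^2*sv*t - 2*su^3 - 2*su^3*t^2*w^2 - 2*su^3*cv^2
      - 2*su^3*sv^2 + su^4*cv*t*w + 2*su^4*sv*t + su^5*cv^2 + su^5*sv^2) * h2
end
end

section
/- Let x : ℝ² → ℝ³ be a smooth map that is a regular parametrized surface on a neighborhood of [0,1]² (i.e. EG − F² > 0 there), with unit normal N = (x_u × x_v)/‖x_u × x_v‖ and mean curvature H = (Ge − 2Ff′ + Eg)/(2(EG − F²)), where e = ⟨x_uu, N⟩, f′ = ⟨x_uv, N⟩, g = ⟨x_vv, N⟩. Let b : ℝ² → ℝ be smooth with b ≥ 0 on [0,1]², and define the normal variation x^t(u,v) = x(u,v) + t b(u,v) H(u,v) N(u,v) and its area A(t) = ∫₀¹ ∫₀¹ ‖∂_u x^t × ∂_v x^t‖ du dv. Then A is differentiable at t = 0 with A′(0) = −∫₀¹ ∫₀¹ 2 b(u,v) H(u,v)² √(E G − F²) du dv ≤ 0; in particular, choosing the variation function proportional to the mean curvature never increases the area to first order. -/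
/- Differential-geometric framework: partial derivatives, fundamental magnitudes,
   cross product and mean-curvature numerator for parametrized surfaces x : ℝ² → ℝ³. -/

set_option linter.unusedSectionVars false
set_option maxHeartbeats 1000000
noncomputable section
open Real MeasureTheory intervalIntegral
open scoped RealInnerProductSpace

/-- Unit normal N = (x_u × x_v)/‖x_u × x_v‖. -/
def Nvec (x : ℝ → ℝ → E3) (u v : ℝ) : E3 :=
  ‖cross (pu x u v) (pv x u v)‖⁻¹ • cross (pu x u v) (pv x u v)

/-- Mean curvature H = (Ge − 2Ff′ + Eg)/(2(EG − F²)), using the unit-normal second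
fundamental magnitudes e = ⟨x_uu, N⟩, f′ = ⟨x_uv, N⟩, g = ⟨x_vv, N⟩. -/
def meanCurv (x : ℝ → ℝ → E3) (u v : ℝ) : ℝ :=
  (Gmag x u v * ⟪pu (pu x) u v, Nvec x u v⟫
      - 2 * Fmag x u v * ⟪pv (pu x) u v, Nvec x u v⟫
      + Emag x u v * ⟪pv (pv x) u v, Nvec x u v⟫)
    / (2 * (Emag x u v * Gmag x u v - Fmag x u v ^ 2))


/-! ### Auxiliary algebra -/

lemma inner3 (a b : E3) : ⟪a, b⟫ = a 0 * b 0 + a 1 * b 1 + a 2 * b 2 := by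
  simp [PiLp.inner_apply, Fin.sum_univ_three]; ring

lemma cross0 (a b : E3) : cross a b 0 = a 1 * b 2 - a 2 * b 1 := by simp [cross, vec3]
lemma cross1 (a b : E3) : cross a b 1 = a 2 * b 0 - a 0 * b 2 := by simp [cross, vec3]
lemma cross2 (a b : E3) : cross a b 2 = a 0 * b 1 - a 1 * b 0 := by simp [cross, vec3]
lemma smul_app (r : ℝ) (a : E3) (i : Fin 3) : (r • a) i = r * a i := rfl
lemma add_app (a b : E3) (i : Fin 3) : (a + b) i = a i + b i := rfl

lemma lagrange (a b c d : E3) : ⟪cross a b, cross c d⟫ = ⟪a,c⟫*⟪b,d⟫ - ⟪a,d⟫*⟪b,c⟫ := by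
  simp only [inner3, cross0, cross1, cross2]; ring

lemma cross_add_left (a b c : E3) : cross (a + b) c = cross a c + cross b c := by
  ext i; fin_cases i <;> simp [cross, vec3, add_app] <;> ring
lemma cross_add_right (a b c : E3) : cross a (b + c) = cross a b + cross a c := by
  ext i; fin_cases i <;> simp [cross, vec3, add_app] <;> ring
lemma cross_smul_left (r : ℝ) (a b : E3) : cross (r • a) b = r • cross a b := by
  ext i; fin_cases i <;> simp [cross, vec3, smul_app] <;> ring
lemma cross_smul_right (r : ℝ) (a b : E3) : cross a (r • b) = r • cross a b := by
  ext i; fin_cases i <;> simp [cross, vec3, smul_app] <;> ring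

lemma norm_sq_cross (a b : E3) : ‖cross a b‖^2 = ⟪a,a⟫*⟪b,b⟫ - ⟪a,b⟫^2 := by
  rw [← real_inner_self_eq_norm_sq, lagrange, real_inner_comm b a]; ring

lemma isBddBilin_cross : IsBoundedBilinearMap ℝ (fun q : E3 × E3 => cross q.1 q.2) := by
  refine ⟨?_, ?_, ?_, ?_, ⟨1, one_pos, ?_⟩⟩
  · intro a b c; exact cross_add_left a b c
  · intro r a b; exact cross_smul_left r a b
  · intro a b c; exact cross_add_right a b c
  · intro r a b; exact cross_smul_right r a b
  · intro a b
    have h := norm_sq_cross a b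
    have h2 : ‖cross a b‖^2 ≤ (1*‖a‖*‖b‖)^2 := by
      nlinarith [real_inner_self_eq_norm_sq a, real_inner_self_eq_norm_sq b,
        sq_nonneg (⟪a,b⟫)]
    exact (pow_le_pow_iff_left₀ (norm_nonneg _) (by positivity) two_ne_zero).mp h2

lemma cross_expand (a b w z : E3) (t : ℝ) :
    cross (a + t • w) (b + t • z)
      = cross a b + t • (cross w b + cross a z) + (t^2) • cross w z := by
  ext i; fin_cases i <;> simp [cross, vec3, smul_app, add_app] <;> ring

set_option maxHeartbeats 1000000 in
lemma key_alg (xu xv xuu xuv xvv : E3) (σ σ' s : ℝ) :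
    ⟪cross (σ • cross xu xv + s • (cross xuu xv + cross xu xuv)) xv
      + cross xu (σ' • cross xu xv + s • (cross xuv xv + cross xu xvv)), cross xu xv⟫
    = -s * (⟪xuu, cross xu xv⟫ * ⟪xv,xv⟫ - 2 * ⟪xu,xv⟫ * ⟪xuv, cross xu xv⟫
        + ⟪xvv, cross xu xv⟫ * ⟪xu,xu⟫) := by
  simp only [inner3, cross0, cross1, cross2, smul_app, add_app]
  ring

/-! ### `ℕ∞` coercion helpers -/

lemma top_add_one : ((⊤:ℕ∞) : WithTop ℕ∞) + 1 ≤ ((⊤:ℕ∞) : WithTop ℕ∞) := by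
  rw [← WithTop.coe_one, ← WithTop.coe_add]
  exact WithTop.coe_le_coe.mpr le_top
lemma two_le_top : (2 : WithTop ℕ∞) ≤ ((⊤:ℕ∞) : WithTop ℕ∞) := by
  show ((2:ℕ∞) : WithTop ℕ∞) ≤ _
  exact WithTop.coe_le_coe.mpr le_top
lemma one_le_top : (1 : WithTop ℕ∞) ≤ ((⊤:ℕ∞) : WithTop ℕ∞) := by
  show ((1:ℕ∞) : WithTop ℕ∞) ≤ _
  exact WithTop.coe_le_coe.mpr le_top
lemma top_ne_zero' : ((⊤:ℕ∞) : WithTop ℕ∞) ≠ 0 :=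
  ne_of_gt (lt_of_lt_of_le zero_lt_one one_le_top)

/-! ### Partial-derivative infrastructure -/

section DuDv
variable {G : Type*} [NormedAddCommGroup G] [NormedSpace ℝ G]

def Du (f : ℝ × ℝ → G) (p : ℝ × ℝ) : G := fderiv ℝ f p (1, 0)
def Dv (f : ℝ × ℝ → G) (p : ℝ × ℝ) : G := fderiv ℝ f p (0, 1)

lemma hasDerivAt_slice_u {f : ℝ × ℝ → G} {p : ℝ × ℝ} (hf : DifferentiableAt ℝ f p) :
    HasDerivAt (fun s => f (s, p.2)) (Du f p) p.1 := by
  have h1 : HasDerivAt (fun s : ℝ => (s, p.2)) ((1:ℝ), (0:ℝ)) p.1 :=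
    (hasDerivAt_id p.1).prodMk (hasDerivAt_const p.1 p.2)
  exact hf.hasFDerivAt.comp_hasDerivAt p.1 h1

lemma hasDerivAt_slice_v {f : ℝ × ℝ → G} {p : ℝ × ℝ} (hf : DifferentiableAt ℝ f p) :
    HasDerivAt (fun s => f (p.1, s)) (Dv f p) p.2 := by
  have h1 : HasDerivAt (fun s : ℝ => (p.1, s)) ((0:ℝ), (1:ℝ)) p.2 :=
    (hasDerivAt_const p.2 p.1).prodMk (hasDerivAt_id p.2)
  exact hf.hasFDerivAt.comp_hasDerivAt p.2 h1

lemma contDiff_Du {f : ℝ × ℝ → G} (hf : ContDiff ℝ (⊤:ℕ∞) f) : ContDiff ℝ (⊤:ℕ∞) (Du f) :=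
  (hf.fderiv_right top_add_one).clm_apply contDiff_const
lemma contDiff_Dv {f : ℝ × ℝ → G} (hf : ContDiff ℝ (⊤:ℕ∞) f) : ContDiff ℝ (⊤:ℕ∞) (Dv f) :=
  (hf.fderiv_right top_add_one).clm_apply contDiff_const

lemma contDiffOn_Du {f : ℝ × ℝ → G} {U : Set (ℝ × ℝ)} (hU : IsOpen U)
    (hf : ContDiffOn ℝ (⊤:ℕ∞) f U) : ContDiffOn ℝ (⊤:ℕ∞) (Du f) U :=
  (hf.fderiv_of_isOpen hU top_add_one).clm_apply contDiffOn_const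
lemma contDiffOn_Dv {f : ℝ × ℝ → G} {U : Set (ℝ × ℝ)} (hU : IsOpen U)
    (hf : ContDiffOn ℝ (⊤:ℕ∞) f U) : ContDiffOn ℝ (⊤:ℕ∞) (Dv f) U :=
  (hf.fderiv_of_isOpen hU top_add_one).clm_apply contDiffOn_const

lemma DuDv_symm {f : ℝ × ℝ → G} (hf : ContDiff ℝ (⊤:ℕ∞) f) (p : ℝ × ℝ) :
    Du (Dv f) p = Dv (Du f) p := by
  have hsymm : IsSymmSndFDerivAt ℝ f p := (hf.contDiffAt).isSymmSndFDerivAt (by simpa [minSmoothness_of_isRCLikeNormedField] using two_le_top)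
  have hd : DifferentiableAt ℝ (fderiv ℝ f) p :=
    ((hf.fderiv_right top_add_one).differentiable top_ne_zero').differentiableAt
  have h1 : Du (Dv f) p = fderiv ℝ (fderiv ℝ f) p (1,0) (0,1) := by
    unfold Du Dv
    rw [fderiv_clm_apply hd (differentiableAt_const _)]
    simp
  have h2 : Dv (Du f) p = fderiv ℝ (fderiv ℝ f) p (0,1) (1,0) := by
    unfold Du Dv
    rw [fderiv_clm_apply hd (differentiableAt_const _)]
    simp
  rw [h1, h2, hsymm (1,0) (0,1)]

end DuDv

lemma hasDerivAt_cross {f g : ℝ → E3} {f' g' : E3} {t : ℝ}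
    (hf : HasDerivAt f f' t) (hg : HasDerivAt g g' t) :
    HasDerivAt (fun s => cross (f s) (g s)) (cross (f t) g' + cross f' (g t)) t := by
  have h := (isBddBilin_cross.hasFDerivAt (f t, g t)).comp_hasDerivAt t (hf.prodMk hg)
  simp [isBddBilin_cross.deriv_apply] at h
  exact h

/-- Derivative of `t ↦ ‖c + t•m + t²•q‖`. -/
lemma hasDerivAt_norm_poly (c m q : E3) {t : ℝ} (h : c + t • m + t^2 • q ≠ 0) :
    HasDerivAt (fun s => ‖c + s • m + s^2 • q‖)
      (⟪m + (2*t) • q, c + t • m + t^2 • q⟫ / ‖c + t • m + t^2 • q‖) t := by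
  set γ : ℝ → E3 := fun s => c + s • m + s^2 • q with hγ
  have hγd : HasDerivAt γ (m + (2*t) • q) t := by
    have h1 : HasDerivAt (fun s : ℝ => c + s • m) (m) t := by
      simpa using ((hasDerivAt_id t).smul_const m).const_add c
    have h2 : HasDerivAt (fun s : ℝ => s^2 • q) ((2*t) • q) t := by
      have := (hasDerivAt_pow 2 t).smul_const q
      simpa [mul_comm] using this
    exact h1.add h2
  have hγne : γ t ≠ 0 := h
  have hin : HasDerivAt (fun s => ⟪γ s, γ s⟫) (⟪γ t, m + (2*t) • q⟫ + ⟪m + (2*t) • q, γ t⟫) t :=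
    hγd.inner ℝ hγd
  have hpos : ⟪γ t, γ t⟫ ≠ 0 := by
    rw [real_inner_self_eq_norm_sq]
    exact pow_ne_zero 2 (norm_ne_zero_iff.mpr hγne)
  have hsq : HasDerivAt (fun s => Real.sqrt ⟪γ s, γ s⟫)
      (1 / (2 * Real.sqrt ⟪γ t, γ t⟫) * (⟪γ t, m + (2*t) • q⟫ + ⟪m + (2*t) • q, γ t⟫)) t :=
    (Real.hasDerivAt_sqrt hpos).comp t hin
  have hfun : (fun s => Real.sqrt ⟪γ s, γ s⟫) = fun s => ‖γ s‖ := by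
    funext s
    rw [real_inner_self_eq_norm_sq, Real.sqrt_sq (norm_nonneg _)]
  rw [hfun] at hsq
  have hval : 1 / (2 * Real.sqrt ⟪γ t, γ t⟫) * (⟪γ t, m + (2*t) • q⟫ + ⟪m + (2*t) • q, γ t⟫)
      = ⟪m + (2*t) • q, γ t⟫ / ‖γ t‖ := by
    rw [real_inner_self_eq_norm_sq, Real.sqrt_sq (norm_nonneg _), real_inner_comm (γ t)]
    have : ‖γ t‖ ≠ 0 := norm_ne_zero_iff.mpr hγne
    field_simp
    ring
  rw [hval] at hsq
  exact hsq

/-! ### Smooth representatives -/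

def Xm (x : ℝ → ℝ → E3) : ℝ × ℝ → E3 := fun p => x p.1 p.2
def xuM (x : ℝ → ℝ → E3) : ℝ × ℝ → E3 := Du (Xm x)
def xvM (x : ℝ → ℝ → E3) : ℝ × ℝ → E3 := Dv (Xm x)
def xuuM (x : ℝ → ℝ → E3) : ℝ × ℝ → E3 := Du (xuM x)
def xuvM (x : ℝ → ℝ → E3) : ℝ × ℝ → E3 := Dv (xuM x)
def xvvM (x : ℝ → ℝ → E3) : ℝ × ℝ → E3 := Dv (xvM x)
def cM (x : ℝ → ℝ → E3) : ℝ × ℝ → E3 := fun p => cross (xuM x p) (xvM x p)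
def QM (x : ℝ → ℝ → E3) : ℝ × ℝ → ℝ :=
  fun p => ⟪xuM x p, xuM x p⟫ * ⟪xvM x p, xvM x p⟫ - ⟪xuM x p, xvM x p⟫^2
def psiM (x : ℝ → ℝ → E3) (b : ℝ → ℝ → ℝ) : ℝ × ℝ → E3 :=
  fun p => (b p.1 p.2 * meanCurv x p.1 p.2) • Nvec x p.1 p.2
def wM (x : ℝ → ℝ → E3) (b : ℝ → ℝ → ℝ) : ℝ × ℝ → E3 := Du (psiM x b)
def zM (x : ℝ → ℝ → E3) (b : ℝ → ℝ → ℝ) : ℝ × ℝ → E3 := Dv (psiM x b)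
def mM (x : ℝ → ℝ → E3) (b : ℝ → ℝ → ℝ) : ℝ × ℝ → E3 :=
  fun p => cross (wM x b p) (xvM x p) + cross (xuM x p) (zM x b p)
def qM (x : ℝ → ℝ → E3) (b : ℝ → ℝ → ℝ) : ℝ × ℝ → E3 :=
  fun p => cross (wM x b p) (zM x b p)
def CM (x : ℝ → ℝ → E3) (b : ℝ → ℝ → ℝ) : ℝ × (ℝ × ℝ) → E3 :=
  fun tp => cM x tp.2 + tp.1 • mM x b tp.2 + (tp.1^2) • qM x b tp.2
def FD (x : ℝ → ℝ → E3) (b : ℝ → ℝ → ℝ) : ℝ × (ℝ × ℝ) → ℝ :=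
  fun tp => ⟪mM x b tp.2 + (2*tp.1) • qM x b tp.2, CM x b tp⟫ / ‖CM x b tp‖

section Bridges
variable {x : ℝ → ℝ → E3} (hx : ContDiff ℝ (⊤:ℕ∞) (fun p : ℝ × ℝ => x p.1 p.2))

include hx

lemma hXm : ContDiff ℝ (⊤:ℕ∞) (Xm x) := hx

lemma pu_eq (u v : ℝ) : pu x u v = xuM x (u, v) := by
  unfold pu xuM
  exact (hasDerivAt_slice_u (f := Xm x) (p := (u,v)) (((hXm hx).differentiable top_ne_zero') (u,v))).deriv

lemma pv_eq (u v : ℝ) : pv x u v = xvM x (u, v) := by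
  unfold pv xvM
  exact (hasDerivAt_slice_v (f := Xm x) (p := (u,v)) (((hXm hx).differentiable top_ne_zero') (u,v))).deriv

lemma hxuM : ContDiff ℝ (⊤:ℕ∞) (xuM x) := contDiff_Du (hXm hx)
lemma hxvM : ContDiff ℝ (⊤:ℕ∞) (xvM x) := contDiff_Dv (hXm hx)
lemma hxuuM : ContDiff ℝ (⊤:ℕ∞) (xuuM x) := contDiff_Du (hxuM hx)
lemma hxuvM : ContDiff ℝ (⊤:ℕ∞) (xuvM x) := contDiff_Dv (hxuM hx)
lemma hxvvM : ContDiff ℝ (⊤:ℕ∞) (xvvM x) := contDiff_Dv (hxvM hx)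

lemma puu_eq (u v : ℝ) : pu (pu x) u v = xuuM x (u, v) := by
  have : (fun a => pu x a v) = fun a => xuM x (a, v) := funext fun a => pu_eq hx a v
  have h0 : pu (pu x) u v = deriv (fun a => pu x a v) u := rfl
  rw [h0, this]
  exact (hasDerivAt_slice_u (((hxuM hx).differentiable top_ne_zero') (u,v))).deriv

lemma puv_eq (u v : ℝ) : pv (pu x) u v = xuvM x (u, v) := by
  have : (fun c => pu x u c) = fun c => xuM x (u, c) := funext fun c => pu_eq hx u c
  have h0 : pv (pu x) u v = deriv (fun c => pu x u c) v := rfl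
  rw [h0, this]
  exact (hasDerivAt_slice_v (((hxuM hx).differentiable top_ne_zero') (u,v))).deriv

lemma pvv_eq (u v : ℝ) : pv (pv x) u v = xvvM x (u, v) := by
  have : (fun c => pv x u c) = fun c => xvM x (u, c) := funext fun c => pv_eq hx u c
  have h0 : pv (pv x) u v = deriv (fun c => pv x u c) v := rfl
  rw [h0, this]
  exact (hasDerivAt_slice_v (((hxvM hx).differentiable top_ne_zero') (u,v))).deriv

/-- slice derivative in `u` of `xvM` is `xuvM` (Clairaut). -/
lemma pu_xv_eq (p : ℝ × ℝ) : Du (xvM x) p = xuvM x p := by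
  unfold xvM xuvM xuM
  exact DuDv_symm (hXm hx) p

lemma cM_eq (u v : ℝ) : cross (pu x u v) (pv x u v) = cM x (u, v) := by
  rw [pu_eq hx, pv_eq hx]; rfl

lemma Nvec_eq (u v : ℝ) : Nvec x u v = ‖cM x (u,v)‖⁻¹ • cM x (u,v) := by
  rw [Nvec, cM_eq hx]

lemma Emag_eq (u v : ℝ) : Emag x u v = ⟪xuM x (u,v), xuM x (u,v)⟫ := by
  rw [Emag, pu_eq hx]
lemma Fmag_eq (u v : ℝ) : Fmag x u v = ⟪xuM x (u,v), xvM x (u,v)⟫ := by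
  rw [Fmag, pu_eq hx, pv_eq hx]
lemma Gmag_eq (u v : ℝ) : Gmag x u v = ⟪xvM x (u,v), xvM x (u,v)⟫ := by
  rw [Gmag, pv_eq hx]
lemma QM_eq (u v : ℝ) : Emag x u v * Gmag x u v - Fmag x u v ^ 2 = QM x (u,v) := by
  rw [Emag_eq hx, Fmag_eq hx, Gmag_eq hx]; rfl

lemma norm_cM_sq (u v : ℝ) : ‖cM x (u,v)‖^2 = QM x (u,v) := by
  rw [cM, QM]; exact norm_sq_cross _ _

lemma hcM : ContDiff ℝ (⊤:ℕ∞) (cM x) :=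
  (isBddBilin_cross.contDiff).comp ((hxuM hx).prodMk (hxvM hx))

lemma hQM : ContDiff ℝ (⊤:ℕ∞) (QM x) := by
  unfold QM
  exact (((hxuM hx).inner ℝ (hxuM hx)).mul ((hxvM hx).inner ℝ (hxvM hx))).sub
    (((hxuM hx).inner ℝ (hxvM hx)).pow 2)

end Bridges

def NM (x : ℝ → ℝ → E3) : ℝ × ℝ → E3 := fun p => ‖cM x p‖⁻¹ • cM x p
def HM (x : ℝ → ℝ → E3) : ℝ × ℝ → ℝ := fun p =>
  (⟪xvM x p, xvM x p⟫ * ⟪xuuM x p, NM x p⟫ - 2 * ⟪xuM x p, xvM x p⟫ * ⟪xuvM x p, NM x p⟫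
    + ⟪xuM x p, xuM x p⟫ * ⟪xvvM x p, NM x p⟫) / (2 * QM x p)
def SM (x : ℝ → ℝ → E3) (b : ℝ → ℝ → ℝ) : ℝ × ℝ → ℝ :=
  fun p => b p.1 p.2 * meanCurv x p.1 p.2 * ‖cM x p‖⁻¹

section Reg
variable {x : ℝ → ℝ → E3} {b : ℝ → ℝ → ℝ} {U : Set (ℝ × ℝ)}
  (hx : ContDiff ℝ (⊤:ℕ∞) (fun p : ℝ × ℝ => x p.1 p.2))
  (hb : ContDiff ℝ (⊤:ℕ∞) (fun p : ℝ × ℝ => b p.1 p.2))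
  (hUo : IsOpen U) (hpos : ∀ p ∈ U, 0 < QM x p)

include hx

lemma meanCurv_eqM (u v : ℝ) : meanCurv x u v = HM x (u,v) := by
  rw [meanCurv, HM, NM, Gmag_eq hx, Fmag_eq hx, Emag_eq hx, puu_eq hx, puv_eq hx, pvv_eq hx,
    Nvec_eq hx, ← QM_eq hx, Emag_eq hx, Fmag_eq hx, Gmag_eq hx]

lemma psiM_eq : psiM x b = fun p => SM x b p • cM x p := by
  funext p
  rw [psiM, SM, Nvec_eq hx, smul_smul]

include hpos

lemma cM_pos : ∀ p ∈ U, 0 < ‖cM x p‖ := by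
  intro p hp
  have h1 : ‖cM x p‖^2 = QM x p := norm_cM_sq hx p.1 p.2
  nlinarith [norm_nonneg (cM x p), hpos p hp]

lemma cM_ne : ∀ p ∈ U, cM x p ≠ 0 := fun p hp =>
  norm_ne_zero_iff.mp (ne_of_gt (cM_pos hx hpos p hp))

lemma hNM : ContDiffOn ℝ (⊤:ℕ∞) (NM x) U := by
  have hn : ContDiffOn ℝ (⊤:ℕ∞) (fun p => ‖cM x p‖) U :=
    ContDiffOn.norm ℝ ((hcM hx).contDiffOn) (cM_ne hx hpos)
  exact (hn.inv (fun p hp => ne_of_gt (cM_pos hx hpos p hp))).smul ((hcM hx).contDiffOn)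

lemma hHM : ContDiffOn ℝ (⊤:ℕ∞) (HM x) U := by
  have hnum : ContDiffOn ℝ (⊤:ℕ∞) (fun p =>
      ⟪xvM x p, xvM x p⟫ * ⟪xuuM x p, NM x p⟫ - 2 * ⟪xuM x p, xvM x p⟫ * ⟪xuvM x p, NM x p⟫
      + ⟪xuM x p, xuM x p⟫ * ⟪xvvM x p, NM x p⟫) U := by
    have h1 := hNM hx hpos
    exact ((((hxvM hx).contDiffOn.inner ℝ ((hxvM hx).contDiffOn)).mul
        (((hxuuM hx).contDiffOn).inner ℝ h1)).sub
      ((contDiffOn_const.mul (((hxuM hx).contDiffOn).inner ℝ ((hxvM hx).contDiffOn))).mul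
        (((hxuvM hx).contDiffOn).inner ℝ h1))).add
      ((((hxuM hx).contDiffOn).inner ℝ ((hxuM hx).contDiffOn)).mul
        (((hxvvM hx).contDiffOn).inner ℝ h1))
  exact hnum.div (contDiffOn_const.mul (hQM hx).contDiffOn)
    (fun p hp => by have := hpos p hp; positivity)

include hb hUo

lemma hSM : ContDiffOn ℝ (⊤:ℕ∞) (SM x b) U := by
  have heq : ∀ p ∈ U, b p.1 p.2 * HM x p * ‖cM x p‖⁻¹ = SM x b p := by
    intro p _
    rw [SM, meanCurv_eqM hx]
  refine ContDiffOn.congr ?_ fun p hp => (heq p hp).symm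
  have hn : ContDiffOn ℝ (⊤:ℕ∞) (fun p => ‖cM x p‖) U :=
    ContDiffOn.norm ℝ ((hcM hx).contDiffOn) (cM_ne hx hpos)
  exact ((hb.contDiffOn.mul (hHM hx hpos)).mul
    (hn.inv (fun p hp => ne_of_gt (cM_pos hx hpos p hp))))

lemma hpsiM : ContDiffOn ℝ (⊤:ℕ∞) (psiM x b) U := by
  rw [psiM_eq hx]
  exact (hSM hx hb hUo hpos).smul ((hcM hx).contDiffOn)

lemma hwM : ContDiffOn ℝ (⊤:ℕ∞) (wM x b) U := contDiffOn_Du hUo (hpsiM hx hb hUo hpos)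
lemma hzM : ContDiffOn ℝ (⊤:ℕ∞) (zM x b) U := contDiffOn_Dv hUo (hpsiM hx hb hUo hpos)

lemma hmM : ContinuousOn (mM x b) U := by
  have h1 := (hwM hx hb hUo hpos).continuousOn
  have h2 := (hzM hx hb hUo hpos).continuousOn
  have h3 := (hcM hx).continuous.continuousOn (s := U)
  exact ((isBddBilin_cross.continuous.comp_continuousOn
      (h1.prodMk ((hxvM hx).continuous.continuousOn)))).add
    (isBddBilin_cross.continuous.comp_continuousOn
      (((hxuM hx).continuous.continuousOn).prodMk h2))

lemma hqM : ContinuousOn (qM x b) U :=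
  isBddBilin_cross.continuous.comp_continuousOn
    (((hwM hx hb hUo hpos).continuousOn).prodMk ((hzM hx hb hUo hpos).continuousOn))

lemma pu_mod {p : ℝ × ℝ} (hp : p ∈ U) (t : ℝ) :
    pu (fun a c => x a c + (t * b a c * meanCurv x a c) • Nvec x a c) p.1 p.2
      = xuM x p + t • wM x b p := by
  have hfun : (fun a => x a p.2 + (t * b a p.2 * meanCurv x a p.2) • Nvec x a p.2)
      = fun a => Xm x (a, p.2) + t • psiM x b (a, p.2) := by
    funext a
    rw [psiM, Xm, mul_assoc, mul_smul]
  have h1 : HasDerivAt (fun a => Xm x (a, p.2)) (xuM x p) p.1 :=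
    hasDerivAt_slice_u (((hXm hx).differentiable top_ne_zero') p)
  have h2 : HasDerivAt (fun a => psiM x b (a, p.2)) (wM x b p) p.1 :=
    hasDerivAt_slice_u
      (((hpsiM hx hb hUo hpos).contDiffAt (hUo.mem_nhds hp)).differentiableAt top_ne_zero')
  have h3 := h1.add (h2.const_smul t)
  have h0 : pu (fun a c => x a c + (t * b a c * meanCurv x a c) • Nvec x a c) p.1 p.2
      = deriv (fun a => x a p.2 + (t * b a p.2 * meanCurv x a p.2) • Nvec x a p.2) p.1 := rfl
  rw [h0, hfun]
  exact h3.deriv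

lemma pv_mod {p : ℝ × ℝ} (hp : p ∈ U) (t : ℝ) :
    pv (fun a c => x a c + (t * b a c * meanCurv x a c) • Nvec x a c) p.1 p.2
      = xvM x p + t • zM x b p := by
  have hfun : (fun c => x p.1 c + (t * b p.1 c * meanCurv x p.1 c) • Nvec x p.1 c)
      = fun c => Xm x (p.1, c) + t • psiM x b (p.1, c) := by
    funext c
    rw [psiM, Xm, mul_assoc, mul_smul]
  have h1 : HasDerivAt (fun c => Xm x (p.1, c)) (xvM x p) p.2 :=
    hasDerivAt_slice_v (((hXm hx).differentiable top_ne_zero') p)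
  have h2 : HasDerivAt (fun c => psiM x b (p.1, c)) (zM x b p) p.2 :=
    hasDerivAt_slice_v
      (((hpsiM hx hb hUo hpos).contDiffAt (hUo.mem_nhds hp)).differentiableAt top_ne_zero')
  have h3 := h1.add (h2.const_smul t)
  have h0 : pv (fun a c => x a c + (t * b a c * meanCurv x a c) • Nvec x a c) p.1 p.2
      = deriv (fun c => x p.1 c + (t * b p.1 c * meanCurv x p.1 c) • Nvec x p.1 c) p.2 := rfl
  rw [h0, hfun]
  exact h3.deriv

lemma cross_mod {p : ℝ × ℝ} (hp : p ∈ U) (t : ℝ) :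
    cross (pu (fun a c => x a c + (t * b a c * meanCurv x a c) • Nvec x a c) p.1 p.2)
      (pv (fun a c => x a c + (t * b a c * meanCurv x a c) • Nvec x a c) p.1 p.2)
      = CM x b (t, p) := by
  rw [pu_mod hx hb hUo hpos hp t, pv_mod hx hb hUo hpos hp t, cross_expand]
  rfl

end Reg

section Val
variable {x : ℝ → ℝ → E3} {b : ℝ → ℝ → ℝ} {U : Set (ℝ × ℝ)}
  (hx : ContDiff ℝ (⊤:ℕ∞) (fun p : ℝ × ℝ => x p.1 p.2))
  (hb : ContDiff ℝ (⊤:ℕ∞) (fun p : ℝ × ℝ => b p.1 p.2))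
  (hUo : IsOpen U) (hpos : ∀ p ∈ U, 0 < QM x p)

include hx hb hUo hpos

lemma wM_val {p : ℝ × ℝ} (hp : p ∈ U) :
    ∃ σ : ℝ, wM x b p
      = σ • cM x p + SM x b p • (cross (xuuM x p) (xvM x p) + cross (xuM x p) (xuvM x p)) := by
  have hSd : DifferentiableAt ℝ (SM x b) p :=
    ((hSM hx hb hUo hpos).contDiffAt (hUo.mem_nhds hp)).differentiableAt top_ne_zero'
  refine ⟨Du (SM x b) p, ?_⟩
  have hσ : HasDerivAt (fun a => SM x b (a, p.2)) (Du (SM x b) p) p.1 := hasDerivAt_slice_u hSd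
  have h1 : HasDerivAt (fun a => xuM x (a, p.2)) (xuuM x p) p.1 :=
    hasDerivAt_slice_u (((hxuM hx).differentiable top_ne_zero') p)
  have h2 : HasDerivAt (fun a => xvM x (a, p.2)) (xuvM x p) p.1 := by
    have := hasDerivAt_slice_u (f := xvM x) (((hxvM hx).differentiable top_ne_zero') p)
    rwa [pu_xv_eq hx] at this
  have hcs : HasDerivAt (fun a => cM x (a, p.2))
      (cross (xuM x p) (xuvM x p) + cross (xuuM x p) (xvM x p)) p.1 :=
    hasDerivAt_cross h1 h2
  have hψ : HasDerivAt (fun a => psiM x b (a, p.2))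
      (SM x b p • (cross (xuM x p) (xuvM x p) + cross (xuuM x p) (xvM x p))
        + Du (SM x b) p • cM x p) p.1 := by
    rw [psiM_eq hx]
    exact hσ.smul hcs
  have hw : HasDerivAt (fun a => psiM x b (a, p.2)) (wM x b p) p.1 :=
    hasDerivAt_slice_u
      (((hpsiM hx hb hUo hpos).contDiffAt (hUo.mem_nhds hp)).differentiableAt top_ne_zero')
  have := hw.unique hψ
  rw [this]
  module

lemma zM_val {p : ℝ × ℝ} (hp : p ∈ U) :
    ∃ σ' : ℝ, zM x b p
      = σ' • cM x p + SM x b p • (cross (xuvM x p) (xvM x p) + cross (xuM x p) (xvvM x p)) := by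
  have hSd : DifferentiableAt ℝ (SM x b) p :=
    ((hSM hx hb hUo hpos).contDiffAt (hUo.mem_nhds hp)).differentiableAt top_ne_zero'
  refine ⟨Dv (SM x b) p, ?_⟩
  have hσ : HasDerivAt (fun c => SM x b (p.1, c)) (Dv (SM x b) p) p.2 := hasDerivAt_slice_v hSd
  have h1 : HasDerivAt (fun c => xuM x (p.1, c)) (xuvM x p) p.2 :=
    hasDerivAt_slice_v (((hxuM hx).differentiable top_ne_zero') p)
  have h2 : HasDerivAt (fun c => xvM x (p.1, c)) (xvvM x p) p.2 :=
    hasDerivAt_slice_v (((hxvM hx).differentiable top_ne_zero') p)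
  have hcs : HasDerivAt (fun c => cM x (p.1, c))
      (cross (xuM x p) (xvvM x p) + cross (xuvM x p) (xvM x p)) p.2 :=
    hasDerivAt_cross h1 h2
  have hψ : HasDerivAt (fun c => psiM x b (p.1, c))
      (SM x b p • (cross (xuM x p) (xvvM x p) + cross (xuvM x p) (xvM x p))
        + Dv (SM x b) p • cM x p) p.2 := by
    rw [psiM_eq hx]
    exact hσ.smul hcs
  have hz : HasDerivAt (fun c => psiM x b (p.1, c)) (zM x b p) p.2 :=
    hasDerivAt_slice_v
      (((hpsiM hx hb hUo hpos).contDiffAt (hUo.mem_nhds hp)).differentiableAt top_ne_zero')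
  have := hz.unique hψ
  rw [this]
  module

lemma FD_zero {u v : ℝ} (hp : (u, v) ∈ U) :
    FD x b (0, (u, v))
      = -(2 * b u v * meanCurv x u v ^ 2 * Real.sqrt (QM x (u, v))) := by
  obtain ⟨σ, hw⟩ := wM_val hx hb hUo hpos hp
  obtain ⟨σ', hz⟩ := zM_val hx hb hUo hpos hp
  have hFD : FD x b (0, (u, v)) = ⟪mM x b (u,v), cM x (u,v)⟫ / ‖cM x (u,v)‖ := by
    simp [FD, CM]
  have hmval : ⟪mM x b (u,v), cM x (u,v)⟫
      = -SM x b (u,v) * (⟪xuuM x (u,v), cM x (u,v)⟫ * ⟪xvM x (u,v), xvM x (u,v)⟫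
          - 2 * ⟪xuM x (u,v), xvM x (u,v)⟫ * ⟪xuvM x (u,v), cM x (u,v)⟫
          + ⟪xvvM x (u,v), cM x (u,v)⟫ * ⟪xuM x (u,v), xuM x (u,v)⟫) := by
    have : mM x b (u,v)
        = cross (σ • cross (xuM x (u,v)) (xvM x (u,v))
            + SM x b (u,v) • (cross (xuuM x (u,v)) (xvM x (u,v))
              + cross (xuM x (u,v)) (xuvM x (u,v)))) (xvM x (u,v))
          + cross (xuM x (u,v)) (σ' • cross (xuM x (u,v)) (xvM x (u,v))
            + SM x b (u,v) • (cross (xuvM x (u,v)) (xvM x (u,v))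
              + cross (xuM x (u,v)) (xvvM x (u,v)))) := by
      rw [mM, hw, hz]; rfl
    rw [this]
    exact key_alg _ _ _ _ _ _ _ _
  set n := ‖cM x (u,v)‖ with hn
  have hnpos : 0 < n := cM_pos hx hpos (u,v) hp
  have hQ : QM x (u,v) = n^2 := (norm_cM_sq hx u v).symm
  have hsqrt : Real.sqrt (QM x (u,v)) = n := by
    rw [hQ, Real.sqrt_sq hnpos.le]
  have hH : meanCurv x u v
      = (⟪xvM x (u,v), xvM x (u,v)⟫ * (n⁻¹ * ⟪xuuM x (u,v), cM x (u,v)⟫)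
        - 2 * ⟪xuM x (u,v), xvM x (u,v)⟫ * (n⁻¹ * ⟪xuvM x (u,v), cM x (u,v)⟫)
        + ⟪xuM x (u,v), xuM x (u,v)⟫ * (n⁻¹ * ⟪xvvM x (u,v), cM x (u,v)⟫)) / (2 * n^2) := by
    rw [meanCurv_eqM hx u v, HM, NM, ← hQ]
    simp only [real_inner_smul_right]
    rfl
  rw [hFD, hmval, hsqrt]
  have hSMeq : SM x b (u,v) = b u v * meanCurv x u v * n⁻¹ := rfl
  rw [hSMeq, hH]
  set e := ⟪xuuM x (u,v), cM x (u,v)⟫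
  set f := ⟪xuvM x (u,v), cM x (u,v)⟫
  set g := ⟪xvvM x (u,v), cM x (u,v)⟫
  set E' := ⟪xuM x (u,v), xuM x (u,v)⟫
  set F' := ⟪xuM x (u,v), xvM x (u,v)⟫
  set G' := ⟪xvM x (u,v), xvM x (u,v)⟫
  field_simp

end Val

section Meas
variable (x : ℝ → ℝ → E3) (b : ℝ → ℝ → ℝ)

lemma meas_wM : Measurable (wM x b) := measurable_fderiv_apply_const ℝ (psiM x b) ((1:ℝ),(0:ℝ))
lemma meas_zM : Measurable (zM x b) := measurable_fderiv_apply_const ℝ (psiM x b) ((0:ℝ),(1:ℝ))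
lemma meas_xuM : Measurable (xuM x) := measurable_fderiv_apply_const ℝ (Xm x) ((1:ℝ),(0:ℝ))
lemma meas_xvM : Measurable (xvM x) := measurable_fderiv_apply_const ℝ (Xm x) ((0:ℝ),(1:ℝ))

lemma meas_cross {α : Type*} [MeasurableSpace α] {f g : α → E3}
    (hf : Measurable f) (hg : Measurable g) : Measurable (fun a => cross (f a) (g a)) :=
  isBddBilin_cross.continuous.measurable.comp (hf.prodMk hg)

lemma meas_cM : Measurable (cM x) := meas_cross (meas_xuM x) (meas_xvM x)
lemma meas_mM : Measurable (mM x b) :=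
  (meas_cross (meas_wM x b) (meas_xvM x)).add (meas_cross (meas_xuM x) (meas_zM x b))
lemma meas_qM : Measurable (qM x b) := meas_cross (meas_wM x b) (meas_zM x b)

lemma meas_CMt (t : ℝ) : Measurable (fun p => CM x b (t, p)) := by
  have : (fun p => CM x b (t, p))
      = fun p => cM x p + t • mM x b p + (t^2) • qM x b p := rfl
  rw [this]
  exact ((meas_cM x).add ((meas_mM x b).const_smul t)).add ((meas_qM x b).const_smul (t^2))

lemma meas_inner3 {α : Type*} [MeasurableSpace α] {f g : α → E3}
    (hf : Measurable f) (hg : Measurable g) : Measurable (fun a => (⟪f a, g a⟫ : ℝ)) :=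
  continuous_inner.measurable.comp (hf.prodMk hg)

lemma meas_FDt (t : ℝ) : Measurable (fun p => FD x b (t, p)) := by
  have : (fun p => FD x b (t, p)) = fun p =>
      ⟪mM x b p + (2*t) • qM x b p, CM x b (t, p)⟫ / ‖CM x b (t, p)‖ := rfl
  rw [this]
  exact (meas_inner3 ((meas_mM x b).add ((meas_qM x b).const_smul (2*t)))
    (meas_CMt x b t)).div (meas_CMt x b t).norm

/-- Measurability of the inner integral as a function of the outer variable. -/
lemma aesm_int {f : ℝ × ℝ → ℝ} (hf : Measurable f) (μ : Measure ℝ) :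
    AEStronglyMeasurable (fun u => ∫ v in (0:ℝ)..1, f (u, v)) μ := by
  have h1 : (fun u => ∫ v in (0:ℝ)..1, f (u, v))
      = fun u => ∫ v in Set.Ioc (0:ℝ) 1, f (u, v) := by
    funext u
    exact intervalIntegral.integral_of_le zero_le_one
  rw [h1]
  have h2 : StronglyMeasurable (Function.uncurry (fun u v => f (u, v))) :=
    hf.stronglyMeasurable
  exact (h2.integral_prod_right (ν := volume.restrict (Set.Ioc 0 1))).aestronglyMeasurable

end Meas
/-- The normal variation x^t = x + t b H N with variation function proportional to the
mean curvature: the area A(t) over [0,1]² is differentiable at t = 0 with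
A′(0) = −∫₀¹∫₀¹ 2 b H² √(EG − F²) ≤ 0, so to first order the area never increases. -/
theorem stmt_19 (x : ℝ → ℝ → E3) (b : ℝ → ℝ → ℝ)
    (hx : ContDiff ℝ (⊤ : ℕ∞) (fun p : ℝ × ℝ => x p.1 p.2))
    (hb : ContDiff ℝ (⊤ : ℕ∞) (fun p : ℝ × ℝ => b p.1 p.2))
    (hbnn : ∀ u ∈ Set.Icc (0:ℝ) 1, ∀ v ∈ Set.Icc (0:ℝ) 1, 0 ≤ b u v)
    (hreg : ∃ U : Set (ℝ × ℝ), IsOpen U ∧ Set.Icc (0:ℝ) 1 ×ˢ Set.Icc (0:ℝ) 1 ⊆ U ∧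
      ∀ p ∈ U, 0 < Emag x p.1 p.2 * Gmag x p.1 p.2 - Fmag x p.1 p.2 ^ 2) :
    HasDerivAt
      (fun t : ℝ => ∫ u in (0:ℝ)..1, ∫ v in (0:ℝ)..1,
        ‖cross
          (pu (fun a c => x a c + (t * b a c * meanCurv x a c) • Nvec x a c) u v)
          (pv (fun a c => x a c + (t * b a c * meanCurv x a c) • Nvec x a c) u v)‖)
      (-∫ u in (0:ℝ)..1, ∫ v in (0:ℝ)..1,
        2 * b u v * meanCurv x u v ^ 2
          * Real.sqrt (Emag x u v * Gmag x u v - Fmag x u v ^ 2)) 0 ∧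
    (-∫ u in (0:ℝ)..1, ∫ v in (0:ℝ)..1,
        2 * b u v * meanCurv x u v ^ 2
          * Real.sqrt (Emag x u v * Gmag x u v - Fmag x u v ^ 2)) ≤ 0 := by
  
  obtain ⟨U, hUo, hKU, hregU⟩ := hreg
  have hpos : ∀ p ∈ U, 0 < QM x p := by
    intro p hp
    have h := hregU p hp
    rwa [QM_eq hx p.1 p.2] at h
  set K : Set (ℝ × ℝ) := Set.Icc (0:ℝ) 1 ×ˢ Set.Icc (0:ℝ) 1 with hKdef
  have hKc : IsCompact K := isCompact_Icc.prod isCompact_Icc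
  have hmapsTo : Set.MapsTo (fun tp : ℝ × (ℝ × ℝ) => tp.2) (Set.univ ×ˢ U) U :=
    fun tp htp => htp.2
  have hCMcont : ContinuousOn (CM x b) (Set.univ ×ˢ U) := by
    have h1 : ContinuousOn (fun tp : ℝ × (ℝ × ℝ) => cM x tp.2) (Set.univ ×ˢ U) :=
      ((hcM hx).continuous.comp continuous_snd).continuousOn
    have h2 : ContinuousOn (fun tp : ℝ × (ℝ × ℝ) => mM x b tp.2) (Set.univ ×ˢ U) :=
      (hmM hx hb hUo hpos).comp continuous_snd.continuousOn hmapsTo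
    have h3 : ContinuousOn (fun tp : ℝ × (ℝ × ℝ) => qM x b tp.2) (Set.univ ×ˢ U) :=
      (hqM hx hb hUo hpos).comp continuous_snd.continuousOn hmapsTo
    exact (h1.add (continuous_fst.continuousOn.smul h2)).add
      (((continuous_fst.pow 2).continuousOn).smul h3)
  set W : Set (ℝ × (ℝ × ℝ)) := (Set.univ ×ˢ U) ∩ (CM x b) ⁻¹' {(0:E3)}ᶜ with hWdef
  have hWo : IsOpen W :=
    hCMcont.isOpen_inter_preimage (isOpen_univ.prod hUo) (isOpen_compl_singleton)
  have hWU : ∀ tp ∈ W, tp.2 ∈ U := fun tp htp => htp.1.2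
  have hWne : ∀ tp ∈ W, CM x b tp ≠ 0 := fun tp htp => htp.2
  have h0K : (fun p : ℝ × ℝ => ((0:ℝ), p)) '' K ⊆ W := by
    rintro _ ⟨p, hpK, rfl⟩
    refine ⟨⟨Set.mem_univ _, hKU hpK⟩, ?_⟩
    have hCM0 : CM x b (0, p) = cM x p := by
      show cM x p + (0:ℝ) • mM x b p + ((0:ℝ)^2) • qM x b p = cM x p
      simp
    simp only [Set.mem_preimage, Set.mem_compl_iff, Set.mem_singleton_iff]
    rw [hCM0]
    exact cM_ne hx hpos p (hKU hpK)
  obtain ⟨δ, hδpos, hδ⟩ :=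
    (hKc.image (continuous_const.prodMk continuous_id)).exists_thickening_subset_open hWo h0K
  have hinW : ∀ t : ℝ, |t| < δ → ∀ p ∈ K, (t, p) ∈ W := by
    intro t ht p hpK
    apply hδ
    rw [Metric.mem_thickening_iff]
    refine ⟨(0, p), Set.mem_image_of_mem _ hpK, ?_⟩
    have : dist (t, p) ((0:ℝ), p) = |t| := by
      rw [Prod.dist_eq]
      simp [Real.dist_eq]
    rw [this]
    exact ht
  set T : Set (ℝ × (ℝ × ℝ)) := Set.Icc (-(δ/2)) (δ/2) ×ˢ K with hTdef
  have hTc : IsCompact T := isCompact_Icc.prod hKc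
  have hTW : T ⊆ W := by
    intro tp htp
    have h1 : |tp.1| < δ := by
      have := htp.1
      rw [Set.mem_Icc] at this
      have habs : |tp.1| ≤ δ/2 := abs_le.mpr ⟨by linarith [this.1], this.2⟩
      linarith
    exact hinW tp.1 h1 tp.2 htp.2
  have hWsub : W ⊆ Set.univ ×ˢ U := Set.inter_subset_left
  have hFDcont : ContinuousOn (FD x b) W := by
    have hm2 : ContinuousOn (fun tp : ℝ × (ℝ × ℝ) => mM x b tp.2) W :=
      ((hmM hx hb hUo hpos).comp continuous_snd.continuousOn hmapsTo).mono hWsub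
    have hq2 : ContinuousOn (fun tp : ℝ × (ℝ × ℝ) => qM x b tp.2) W :=
      ((hqM hx hb hUo hpos).comp continuous_snd.continuousOn hmapsTo).mono hWsub
    have hC2 : ContinuousOn (CM x b) W := hCMcont.mono hWsub
    have hnum : ContinuousOn
        (fun tp : ℝ × (ℝ × ℝ) => (⟪mM x b tp.2 + (2*tp.1) • qM x b tp.2, CM x b tp⟫ : ℝ)) W :=
      (hm2.add (((continuous_const.mul continuous_fst).continuousOn).smul hq2)).inner hC2
    exact hnum.div hC2.norm fun tp htp => norm_ne_zero_iff.mpr (hWne tp htp)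
  obtain ⟨Cb, hCb⟩ := hTc.exists_bound_of_continuousOn (hFDcont.mono hTW)
  obtain ⟨Cc, hCc⟩ := hTc.exists_bound_of_continuousOn
    (hCMcont.mono (fun tp htp => ⟨Set.mem_univ _, (hWU tp (hTW htp))⟩))
  have hmemT : ∀ t : ℝ, |t| ≤ δ/2 → ∀ p ∈ K, (t, p) ∈ T := by
    intro t ht p hp
    exact ⟨Set.mem_Icc.mpr (abs_le.mp ht), hp⟩
  have hIoc : Set.uIoc (0:ℝ) 1 = Set.Ioc 0 1 := Set.uIoc_of_le zero_le_one
  have hδ4 : (0:ℝ) < δ/4 := by linarith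
  -- inner derivative step
  have inner_step : ∀ t₀ ∈ Metric.ball (0:ℝ) (δ/4), ∀ u ∈ Set.Ioc (0:ℝ) 1,
      IntervalIntegrable (fun v => FD x b (t₀, (u, v))) volume 0 1 ∧
      HasDerivAt (fun t => ∫ v in (0:ℝ)..1, ‖CM x b (t, (u, v))‖)
        (∫ v in (0:ℝ)..1, FD x b (t₀, (u, v))) t₀ := by
    intro t₀ ht₀ u hu
    have ht₀' : |t₀| < δ/4 := by
      rw [Metric.mem_ball, Real.dist_eq, sub_zero] at ht₀
      exact ht₀
    have huI : u ∈ Set.Icc (0:ℝ) 1 := Set.Ioc_subset_Icc_self hu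
    have hmemK : ∀ v ∈ Set.Icc (0:ℝ) 1, (u, v) ∈ K := fun v hv => ⟨huI, hv⟩
    have htball : ∀ t ∈ Metric.ball t₀ (δ/4), |t| ≤ δ/2 := by
      intro t ht
      rw [Metric.mem_ball, Real.dist_eq] at ht
      have : |t| ≤ |t - t₀| + |t₀| := by
        calc |t| = |(t - t₀) + t₀| := by ring_nf
        _ ≤ |t - t₀| + |t₀| := abs_add_le _ _
      linarith
    refine intervalIntegral.hasDerivAt_integral_of_dominated_loc_of_deriv_le
      (F := fun t v => ‖CM x b (t, (u, v))‖) (F' := fun t v => FD x b (t, (u, v)))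
      (bound := fun _ => Cb) (μ := volume) (a := 0) (b := 1) (x₀ := t₀) (Metric.ball_mem_nhds t₀ hδ4)
      ?_ ?_ ?_ ?_ ?_ ?_
    · exact Filter.Eventually.of_forall fun t =>
        (((meas_CMt x b t).comp measurable_prodMk_left).norm).aestronglyMeasurable
    · rw [intervalIntegrable_iff_integrableOn_Ioc_of_le zero_le_one]
      refine Integrable.mono' (integrable_const Cc)
        (((meas_CMt x b t₀).comp measurable_prodMk_left).norm).aestronglyMeasurable ?_
      refine (ae_restrict_iff' measurableSet_Ioc).2 (Filter.Eventually.of_forall ?_)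
      intro v hv
      rw [norm_norm]
      exact hCc (t₀, (u, v)) (hmemT t₀ (by linarith) (u,v)
        (hmemK v (Set.Ioc_subset_Icc_self hv)))
    · exact ((meas_FDt x b t₀).comp measurable_prodMk_left).aestronglyMeasurable
    · refine Filter.Eventually.of_forall fun v hv t ht => ?_
      rw [hIoc] at hv
      exact hCb (t, (u, v)) (hmemT t (htball t ht) (u,v) (hmemK v (Set.Ioc_subset_Icc_self hv)))
    · exact intervalIntegrable_const
    · refine Filter.Eventually.of_forall fun v hv t ht => ?_
      rw [hIoc] at hv
      have hWmem : (t, (u, v)) ∈ W :=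
        hTW (hmemT t (htball t ht) (u,v) (hmemK v (Set.Ioc_subset_Icc_self hv)))
      have hne : cM x (u,v) + t • mM x b (u,v) + t^2 • qM x b (u,v) ≠ 0 := hWne (t, (u, v)) hWmem
      exact hasDerivAt_norm_poly (cM x (u,v)) (mM x b (u,v)) (qM x b (u,v)) hne
  -- outer derivative step
  have houter : HasDerivAt
      (fun t => ∫ u in (0:ℝ)..1, ∫ v in (0:ℝ)..1, ‖CM x b (t, (u, v))‖)
      (∫ u in (0:ℝ)..1, ∫ v in (0:ℝ)..1, FD x b (0, (u, v))) 0 := by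
    have h0ball : (0:ℝ) ∈ Metric.ball (0:ℝ) (δ/4) := Metric.mem_ball_self hδ4
    refine (intervalIntegral.hasDerivAt_integral_of_dominated_loc_of_deriv_le
      (F := fun t u => ∫ v in (0:ℝ)..1, ‖CM x b (t, (u, v))‖)
      (F' := fun t u => ∫ v in (0:ℝ)..1, FD x b (t, (u, v)))
      (bound := fun _ => Cb * |1 - (0:ℝ)|) (μ := volume) (a := 0) (b := 1) (x₀ := 0) (Metric.ball_mem_nhds 0 hδ4)
      ?_ ?_ ?_ ?_ ?_ ?_).2
    · exact Filter.Eventually.of_forall fun t =>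
        aesm_int ((meas_CMt x b t).norm) _
    · rw [intervalIntegrable_iff_integrableOn_Ioc_of_le zero_le_one]
      refine Integrable.mono' (integrable_const (Cc * |1 - (0:ℝ)|))
        (aesm_int ((meas_CMt x b 0).norm) _) ?_
      refine (ae_restrict_iff' measurableSet_Ioc).2 (Filter.Eventually.of_forall ?_)
      intro u hu
      refine intervalIntegral.norm_integral_le_of_norm_le_const ?_
      intro v hv
      rw [hIoc] at hv
      rw [norm_norm]
      exact hCc (0, (u, v)) (hmemT 0 (by simp; linarith) (u,v)
        ⟨Set.Ioc_subset_Icc_self hu, Set.Ioc_subset_Icc_self hv⟩)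
    · exact aesm_int (meas_FDt x b 0) _
    · refine Filter.Eventually.of_forall fun u hu t ht => ?_
      rw [hIoc] at hu
      refine intervalIntegral.norm_integral_le_of_norm_le_const ?_
      intro v hv
      rw [hIoc] at hv
      have htle : |t| ≤ δ/2 := by
        rw [Metric.mem_ball, Real.dist_eq, sub_zero] at ht
        linarith
      exact hCb (t, (u, v)) (hmemT t htle (u,v)
        ⟨Set.Ioc_subset_Icc_self hu, Set.Ioc_subset_Icc_self hv⟩)
    · exact intervalIntegrable_const
    · refine Filter.Eventually.of_forall fun u hu t ht => ?_
      rw [hIoc] at hu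
      exact (inner_step t ht u hu).2
  -- rewrite the function
  have hfun_eq : (fun t : ℝ => ∫ u in (0:ℝ)..1, ∫ v in (0:ℝ)..1,
        ‖cross
          (pu (fun a c => x a c + (t * b a c * meanCurv x a c) • Nvec x a c) u v)
          (pv (fun a c => x a c + (t * b a c * meanCurv x a c) • Nvec x a c) u v)‖)
      = fun t => ∫ u in (0:ℝ)..1, ∫ v in (0:ℝ)..1, ‖CM x b (t, (u, v))‖ := by
    funext t
    refine intervalIntegral.integral_congr ?_
    intro u hu
    rw [Set.uIcc_of_le zero_le_one] at hu
    refine intervalIntegral.integral_congr ?_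
    intro v hv
    rw [Set.uIcc_of_le zero_le_one] at hv
    have hpU : (u, v) ∈ U := hKU ⟨hu, hv⟩
    exact congrArg norm (cross_mod hx hb hUo hpos hpU t)
  -- rewrite the value
  have hval : (∫ u in (0:ℝ)..1, ∫ v in (0:ℝ)..1, FD x b (0, (u, v)))
      = -∫ u in (0:ℝ)..1, ∫ v in (0:ℝ)..1,
          2 * b u v * meanCurv x u v ^ 2
            * Real.sqrt (Emag x u v * Gmag x u v - Fmag x u v ^ 2) := by
    have hinner : ∀ u ∈ Set.Icc (0:ℝ) 1, (∫ v in (0:ℝ)..1, FD x b (0, (u, v)))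
        = -(∫ v in (0:ℝ)..1, 2 * b u v * meanCurv x u v ^ 2
            * Real.sqrt (Emag x u v * Gmag x u v - Fmag x u v ^ 2)) := by
      intro u hu
      have h1 : (∫ v in (0:ℝ)..1, FD x b (0, (u, v)))
          = ∫ v in (0:ℝ)..1, -(2 * b u v * meanCurv x u v ^ 2
              * Real.sqrt (Emag x u v * Gmag x u v - Fmag x u v ^ 2)) := by
        refine intervalIntegral.integral_congr ?_
        intro v hv
        rw [Set.uIcc_of_le zero_le_one] at hv
        have hpU : (u, v) ∈ U := hKU ⟨hu, hv⟩
        show FD x b (0, (u, v)) = -(2 * b u v * meanCurv x u v ^ 2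
            * Real.sqrt (Emag x u v * Gmag x u v - Fmag x u v ^ 2))
        rw [FD_zero hx hb hUo hpos hpU, ← QM_eq hx u v]
      rw [h1, intervalIntegral.integral_neg]
    have h2 : (∫ u in (0:ℝ)..1, ∫ v in (0:ℝ)..1, FD x b (0, (u, v)))
        = ∫ u in (0:ℝ)..1, -(∫ v in (0:ℝ)..1, 2 * b u v * meanCurv x u v ^ 2
            * Real.sqrt (Emag x u v * Gmag x u v - Fmag x u v ^ 2)) := by
      refine intervalIntegral.integral_congr ?_
      intro u hu
      rw [Set.uIcc_of_le zero_le_one] at hu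
      exact hinner u hu
    rw [h2, intervalIntegral.integral_neg]
  constructor
  · rw [hfun_eq, ← hval]
    exact houter
  · rw [neg_nonpos]
    refine intervalIntegral.integral_nonneg zero_le_one ?_
    intro u hu
    refine intervalIntegral.integral_nonneg zero_le_one ?_
    intro v hv
    have hb0 := hbnn u hu v hv
    have h1 : (0:ℝ) ≤ 2 * b u v := by linarith
    exact mul_nonneg (mul_nonneg h1 (sq_nonneg _)) (Real.sqrt_nonneg _)
end
end
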